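/- Let V_i : ℂ^{d_i} → ℂ^{n_i} ⊗ ℂ^{k_i} (i = 1,2) be isometries defining quantum channels L_i(X) = [Tr_{n_i} ⊗ id_{k_i}](V_i X V_i*), and let L_1 ⊗ L_2 be the quantum channel defined by the isometry V_1 ⊗ V_2 : ℂ^{d_1} ⊗ ℂ^{d_2} → (ℂ^{n_1} ⊗ ℂ^{n_2}) ⊗ (ℂ^{k_1} ⊗ ℂ^{k_2}) (obtained from the Kronecker product after regrouping tensor factors). Then each of the five quantities B_C(L) = ‖C_L‖, B_{CΓ}(L) = ‖C_L^Γ‖, B_{CcΓ}(L) = ‖C_{L^c}^Γ‖, B_{MΓ}(L) = ‖(V V*)^Γ‖ and B_I(L) = ‖L(I)‖ is multiplicative: B(L_1 ⊗ L_2) = B(L_1) · B(L_2). -/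

import Mathlib

open scoped Kronecker ENNReal ComplexOrder
open Matrix Filter

noncomputable section

/-- A quantum state: a positive semidefinite matrix of trace 1. -/
def IsState {A : Type*} [Fintype A] (X : Matrix A A ℂ) : Prop :=
  X.PosSemidef ∧ X.trace = 1

/-- The Choi matrix of a linear map between matrix algebras. -/
def choiMatrix {A B : Type*} [Fintype A] [DecidableEq A]
    (L : Matrix A A ℂ →ₗ[ℂ] Matrix B B ℂ) : Matrix (B × A) (B × A) ℂ :=
  ∑ i : A, ∑ j : A, (L (Matrix.single i j 1)) ⊗ₖ (Matrix.single i j 1)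

/-- A quantum channel: a trace-preserving, completely positive linear map, the latter
meaning that its Choi matrix is positive semidefinite. -/
def IsChannel {A B : Type*} [Fintype A] [DecidableEq A] [Fintype B]
    (L : Matrix A A ℂ →ₗ[ℂ] Matrix B B ℂ) : Prop :=
  (∀ X, (L X).trace = X.trace) ∧ (choiMatrix L).PosSemidef

/-- The p-Rényi entropy of a (Hermitian) matrix, p ∈ [0,∞]. -/
def renyiEntropy {B : Type*} [Fintype B] [DecidableEq B] (p : ℝ≥0∞)
    (X : Matrix B B ℂ) : ℝ :=
  if h : X.IsHermitian then
    if p = 0 then Real.log (Nat.card {i // h.eigenvalues i ≠ 0})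
    else if p = 1 then -∑ i, h.eigenvalues i * Real.log (h.eigenvalues i)
    else if p = ⊤ then -Real.log (⨆ i, h.eigenvalues i)
    else (1 - p.toReal)⁻¹ * Real.log (∑ i, (h.eigenvalues i) ^ p.toReal)
  else 0

/-- The minimum output p-Rényi entropy of a channel. -/
def minOutputEntropy {A B : Type*} [Fintype A] [Fintype B] [DecidableEq B] (p : ℝ≥0∞)
    (L : Matrix A A ℂ →ₗ[ℂ] Matrix B B ℂ) : ℝ :=
  ⨅ X : {X : Matrix A A ℂ // IsState X}, renyiEntropy p (L X.1)

/-- The r-fold tensor power of a linear map between matrix algebras, determined by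
Kronecker products of matrix units. -/
def tensorPow {A B : Type*} [Fintype A] [DecidableEq A] [Fintype B]
    (L : Matrix A A ℂ →ₗ[ℂ] Matrix B B ℂ) (r : ℕ) :
    Matrix (Fin r → A) (Fin r → A) ℂ →ₗ[ℂ] Matrix (Fin r → B) (Fin r → B) ℂ where
  toFun X := Matrix.of fun i j => ∑ a : Fin r → A, ∑ b : Fin r → A,
      X a b * ∏ m, L (Matrix.single (a m) (b m) 1) (i m) (j m)
  map_add' X Y := by
    ext i j
    simp [Matrix.add_apply, add_mul, Finset.sum_add_distrib]
  map_smul' c X := by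
    ext i j
    simp [Matrix.smul_apply, smul_eq_mul, Finset.mul_sum, mul_assoc]

/-- The tensor product of two linear maps between matrix algebras, determined by
Kronecker products: (L ⊗ K)(X ⊗ Y) = L(X) ⊗ K(Y). -/
def channelTensor {A B C D : Type*} [Fintype A] [DecidableEq A] [Fintype B]
    [Fintype C] [DecidableEq C] [Fintype D]
    (L : Matrix A A ℂ →ₗ[ℂ] Matrix B B ℂ) (K : Matrix C C ℂ →ₗ[ℂ] Matrix D D ℂ) :
    Matrix (A × C) (A × C) ℂ →ₗ[ℂ] Matrix (B × D) (B × D) ℂ where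
  toFun X := Matrix.of fun i j => ∑ a : A × C, ∑ b : A × C,
      X a b * (L (Matrix.single a.1 b.1 1) i.1 j.1
        * K (Matrix.single a.2 b.2 1) i.2 j.2)
  map_add' X Y := by
    ext i j
    simp [Matrix.add_apply, add_mul, Finset.sum_add_distrib]
  map_smul' c X := by
    ext i j
    simp [Matrix.smul_apply, smul_eq_mul, Finset.mul_sum, mul_assoc]

/-- The p-additivity rate of a channel. -/
def additivityRate {A B : Type*} [Fintype A] [DecidableEq A] [Fintype B] [DecidableEq B]
    (p : ℝ≥0∞) (L : Matrix A A ℂ →ₗ[ℂ] Matrix B B ℂ) : ℝ :=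
  sSup {a : ℝ | a ∈ Set.Icc (0 : ℝ) 1 ∧
    a * minOutputEntropy p L ≤
      Filter.liminf (fun r : ℕ => minOutputEntropy p (tensorPow L r) / r) Filter.atTop}

/-- The operator norm (the norm induced by the ℓ² Euclidean norm) of a matrix. -/
def opNorm {A : Type*} [Fintype A] [DecidableEq A] (M : Matrix A A ℂ) : ℝ :=
  ‖Matrix.toEuclideanCLM (𝕜 := ℂ) M‖

/-- Partial trace over the first tensor factor. -/
def ptraceFst {N K : Type*} [Fintype N] (M : Matrix (N × K) (N × K) ℂ) : Matrix K K ℂ :=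
  Matrix.of fun i j => ∑ a : N, M (a, i) (a, j)

/-- Partial trace over the second tensor factor. -/
def ptraceSnd {N K : Type*} [Fintype K] (M : Matrix (N × K) (N × K) ℂ) : Matrix N N ℂ :=
  Matrix.of fun i j => ∑ b : K, M (i, b) (j, b)

/-- Partial transposition of the second tensor factor. -/
def ptranspose {B Q : Type*} (M : Matrix (B × Q) (B × Q) ℂ) : Matrix (B × Q) (B × Q) ℂ :=
  Matrix.of fun p q => M (p.1, q.2) (q.1, p.2)

/-- The quantum channel associated to an isometry V : ℂ^d → ℂ^n ⊗ ℂ^k,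
X ↦ [Tr_n ⊗ id_k](V X V*). -/
def channelOfIsometry {N K D : Type*} [Fintype N] [Fintype K] [Fintype D]
    (V : Matrix (N × K) D ℂ) : Matrix D D ℂ →ₗ[ℂ] Matrix K K ℂ where
  toFun X := ptraceFst (V * X * Vᴴ)
  map_add' X Y := by
    ext i j
    simp [ptraceFst, Matrix.mul_add, Matrix.add_mul, Finset.sum_add_distrib]
  map_smul' c X := by
    ext i j
    simp [ptraceFst, Matrix.mul_smul, Matrix.smul_mul, Finset.mul_sum]

/-- The complementary channel associated to an isometry V : ℂ^d → ℂ^n ⊗ ℂ^k,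
X ↦ [id_n ⊗ Tr_k](V X V*). -/
def compChannelOfIsometry {N K D : Type*} [Fintype N] [Fintype K] [Fintype D]
    (V : Matrix (N × K) D ℂ) : Matrix D D ℂ →ₗ[ℂ] Matrix N N ℂ where
  toFun X := ptraceSnd (V * X * Vᴴ)
  map_add' X Y := by
    ext i j
    simp [ptraceSnd, Matrix.mul_add, Matrix.add_mul, Finset.sum_add_distrib]
  map_smul' c X := by
    ext i j
    simp [ptraceSnd, Matrix.mul_smul, Matrix.smul_mul, Finset.mul_sum]

/-- The Kronecker product of two isometries, regrouped so that the environment factors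
come first and the output factors second. -/
def isometryTensor {N₁ K₁ D₁ N₂ K₂ D₂ : Type*}
    (V₁ : Matrix (N₁ × K₁) D₁ ℂ) (V₂ : Matrix (N₂ × K₂) D₂ ℂ) :
    Matrix ((N₁ × N₂) × (K₁ × K₂)) (D₁ × D₂) ℂ :=
  Matrix.of fun p c => V₁ (p.1.1, p.2.1) c.1 * V₂ (p.1.2, p.2.2) c.2

end


noncomputable section AuxBoundsMult

open Matrix

variable {I J : Type*} [Fintype I] [DecidableEq I] [Fintype J] [DecidableEq J]

private lemma le_of_sq_le_sq' {a b : ℝ} (ha : 0 ≤ a) (hb : 0 ≤ b) (h : a^2 ≤ b^2) : a ≤ b := by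
  nlinarith

private lemma eq_of_sq_eq_sq' {a b : ℝ} (ha : 0 ≤ a) (hb : 0 ≤ b) (h : a^2 = b^2) : a = b := by
  nlinarith

lemma euclid_apply' (M : Matrix I I ℂ) (x : EuclideanSpace ℂ I) (i : I) :
    (toEuclideanCLM (𝕜 := ℂ) M x) i = ∑ j, M i j * x j := rfl

lemma opNorm_reindex_le' (e : I ≃ J) (M : Matrix I I ℂ) :
    opNorm (reindex e e M) ≤ opNorm M := by
  refine ContinuousLinearMap.opNorm_le_bound _ (norm_nonneg _) fun x => ?_
  set T := toEuclideanCLM (𝕜 := ℂ) M with hT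
  set y : EuclideanSpace ℂ I := (WithLp.equiv 2 (I → ℂ)).symm (fun i => x (e i)) with hy
  have hyi : ∀ i, y i = x (e i) := fun i => rfl
  have hyx : ‖y‖ = ‖x‖ := by
    refine eq_of_sq_eq_sq' (norm_nonneg _) (norm_nonneg _) ?_
    rw [PiLp.norm_sq_eq_of_L2, PiLp.norm_sq_eq_of_L2]
    rw [← Equiv.sum_comp e (fun j => ‖x j‖^2)]
    exact Finset.sum_congr rfl fun i _ => by rw [hyi]
  have hpt : ∀ j, (toEuclideanCLM (𝕜 := ℂ) (reindex e e M) x) j = T (y) (e.symm j) := by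
    intro j
    rw [euclid_apply', hT, euclid_apply']
    simp only [reindex_apply, submatrix_apply]
    rw [← Equiv.sum_comp e (fun j' => M (e.symm j) (e.symm j') * x j')]
    exact Finset.sum_congr rfl fun i _ => by rw [e.symm_apply_apply, hyi]
  have hnorm : ‖toEuclideanCLM (𝕜 := ℂ) (reindex e e M) x‖ = ‖T y‖ := by
    refine eq_of_sq_eq_sq' (norm_nonneg _) (norm_nonneg _) ?_
    rw [PiLp.norm_sq_eq_of_L2, PiLp.norm_sq_eq_of_L2]
    rw [← Equiv.sum_comp e.symm (fun i => ‖T y i‖^2)]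
    exact Finset.sum_congr rfl fun j _ => by rw [hpt]
  rw [hnorm, ← hyx]
  exact T.le_opNorm y

lemma opNorm_reindex' (e : I ≃ J) (M : Matrix I I ℂ) :
    opNorm (reindex e e M) = opNorm M := by
  refine le_antisymm (opNorm_reindex_le' e M) ?_
  have := opNorm_reindex_le' e.symm (reindex e e M)
  simpa using this

open scoped Kronecker

lemma opNorm_kron_one_le (A : Matrix I I ℂ) :
    opNorm (A ⊗ₖ (1 : Matrix J J ℂ)) ≤ opNorm A := by
  refine ContinuousLinearMap.opNorm_le_bound _ (norm_nonneg _) fun x => ?_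
  set T := toEuclideanCLM (𝕜 := ℂ) A with hT
  set f : J → EuclideanSpace ℂ I :=
    fun j => (WithLp.equiv 2 (I → ℂ)).symm (fun i => x (i, j)) with hf
  have hfi : ∀ j i, f j i = x (i, j) := fun j i => rfl
  have key : ∀ p : I × J,
      (toEuclideanCLM (𝕜 := ℂ) (A ⊗ₖ (1 : Matrix J J ℂ)) x) p = T (f p.2) p.1 := by
    intro p
    rw [euclid_apply', hT, euclid_apply']
    rw [Fintype.sum_prod_type]
    have : ∀ k, ∑ l, (A ⊗ₖ (1 : Matrix J J ℂ)) p (k, l) * x (k, l)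
        = A p.1 k * f p.2 k := by
      intro k
      simp [kroneckerMap_apply, Matrix.one_apply, ite_mul, mul_ite, hfi]
    simp only [this]
  refine le_of_sq_le_sq' (norm_nonneg _)
    (mul_nonneg (norm_nonneg _) (norm_nonneg _)) ?_
  rw [mul_pow, PiLp.norm_sq_eq_of_L2]
  calc ∑ p : I × J, ‖(toEuclideanCLM (𝕜 := ℂ) (A ⊗ₖ (1 : Matrix J J ℂ)) x) p‖^2
      = ∑ p : I × J, ‖T (f p.2) p.1‖^2 :=
        Finset.sum_congr rfl fun p _ => by rw [key]
    _ = ∑ j, ∑ i, ‖T (f j) i‖^2 := by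
        rw [Fintype.sum_prod_type]; exact Finset.sum_comm
    _ = ∑ j, ‖T (f j)‖^2 := by
        refine Finset.sum_congr rfl fun j _ => ?_
        rw [PiLp.norm_sq_eq_of_L2]
    _ ≤ ∑ j, (opNorm A * ‖f j‖)^2 := by
        refine Finset.sum_le_sum fun j _ => ?_
        exact pow_le_pow_left₀ (norm_nonneg _) (T.le_opNorm _) 2
    _ = (opNorm A)^2 * ∑ j, ‖f j‖^2 := by
        rw [Finset.mul_sum]; exact Finset.sum_congr rfl fun j _ => by ring
    _ = (opNorm A)^2 * ‖x‖^2 := by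
        congr 1
        rw [PiLp.norm_sq_eq_of_L2, Fintype.sum_prod_type]
        rw [Finset.sum_comm]
        exact Finset.sum_congr rfl fun j _ => by
          rw [PiLp.norm_sq_eq_of_L2]
          exact Finset.sum_congr rfl fun i _ => by rw [hfi]

lemma opNorm_one_kron_le (B : Matrix J J ℂ) :
    opNorm ((1 : Matrix I I ℂ) ⊗ₖ B) ≤ opNorm B := by
  refine ContinuousLinearMap.opNorm_le_bound _ (norm_nonneg _) fun x => ?_
  set T := toEuclideanCLM (𝕜 := ℂ) B with hT
  set f : I → EuclideanSpace ℂ J :=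
    fun i => (WithLp.equiv 2 (J → ℂ)).symm (fun j => x (i, j)) with hf
  have hfi : ∀ i j, f i j = x (i, j) := fun i j => rfl
  have key : ∀ p : I × J,
      (toEuclideanCLM (𝕜 := ℂ) ((1 : Matrix I I ℂ) ⊗ₖ B) x) p = T (f p.1) p.2 := by
    intro p
    rw [euclid_apply', hT, euclid_apply']
    rw [Fintype.sum_prod_type]
    have : ∀ k, ∑ l, ((1 : Matrix I I ℂ) ⊗ₖ B) p (k, l) * x (k, l)
        = (if p.1 = k then 1 else 0) * ∑ l, B p.2 l * f k l := by
      intro k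
      simp [kroneckerMap_apply, Matrix.one_apply, ite_mul, mul_ite, hfi, Finset.mul_sum,
        mul_comm]
    simp only [this]
    simp [ite_mul]
  refine le_of_sq_le_sq' (norm_nonneg _)
    (mul_nonneg (norm_nonneg _) (norm_nonneg _)) ?_
  rw [mul_pow, PiLp.norm_sq_eq_of_L2]
  calc ∑ p : I × J, ‖(toEuclideanCLM (𝕜 := ℂ) ((1 : Matrix I I ℂ) ⊗ₖ B) x) p‖^2
      = ∑ p : I × J, ‖T (f p.1) p.2‖^2 :=
        Finset.sum_congr rfl fun p _ => by rw [key]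
    _ = ∑ i, ∑ j, ‖T (f i) j‖^2 := by rw [Fintype.sum_prod_type]
    _ = ∑ i, ‖T (f i)‖^2 := by
        refine Finset.sum_congr rfl fun i _ => ?_
        rw [PiLp.norm_sq_eq_of_L2]
    _ ≤ ∑ i, (opNorm B * ‖f i‖)^2 := by
        refine Finset.sum_le_sum fun i _ => ?_
        exact pow_le_pow_left₀ (norm_nonneg _) (T.le_opNorm _) 2
    _ = (opNorm B)^2 * ∑ i, ‖f i‖^2 := by
        rw [Finset.mul_sum]; exact Finset.sum_congr rfl fun i _ => by ring
    _ = (opNorm B)^2 * ‖x‖^2 := by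
        congr 1
        rw [PiLp.norm_sq_eq_of_L2, Fintype.sum_prod_type]
        refine Finset.sum_congr rfl fun i _ => ?_
        rw [PiLp.norm_sq_eq_of_L2]
        exact Finset.sum_congr rfl fun j _ => by rw [hfi]

lemma opNorm_kron_le (A : Matrix I I ℂ) (B : Matrix J J ℂ) :
    opNorm (A ⊗ₖ B) ≤ opNorm A * opNorm B := by
  have h : A ⊗ₖ B = (A ⊗ₖ (1 : Matrix J J ℂ)) * ((1 : Matrix I I ℂ) ⊗ₖ B) := by
    rw [← Matrix.mul_kronecker_mul, Matrix.mul_one, Matrix.one_mul]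
  unfold opNorm
  rw [h, _root_.map_mul]
  exact (norm_mul_le _ _).trans
    (mul_le_mul (opNorm_kron_one_le A) (opNorm_one_kron_le B) (norm_nonneg _)
      (norm_nonneg _))

def tensorVec (x : EuclideanSpace ℂ I) (y : EuclideanSpace ℂ J) :
    EuclideanSpace ℂ (I × J) :=
  (WithLp.equiv 2 (I × J → ℂ)).symm (fun p => x p.1 * y p.2)

lemma tensorVec_apply (x : EuclideanSpace ℂ I) (y : EuclideanSpace ℂ J) (p : I × J) :
    tensorVec x y p = x p.1 * y p.2 := rfl

lemma norm_tensorVec (x : EuclideanSpace ℂ I) (y : EuclideanSpace ℂ J) :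
    ‖tensorVec x y‖ = ‖x‖ * ‖y‖ := by
  refine eq_of_sq_eq_sq' (norm_nonneg _) (mul_nonneg (norm_nonneg _) (norm_nonneg _)) ?_
  rw [mul_pow, PiLp.norm_sq_eq_of_L2, PiLp.norm_sq_eq_of_L2, PiLp.norm_sq_eq_of_L2]
  rw [Fintype.sum_prod_type, Finset.sum_mul_sum]
  exact Finset.sum_congr rfl fun i _ => Finset.sum_congr rfl fun j _ => by
    rw [tensorVec_apply, norm_mul, mul_pow]

lemma kron_tensorVec (A : Matrix I I ℂ) (B : Matrix J J ℂ)
    (x : EuclideanSpace ℂ I) (y : EuclideanSpace ℂ J) :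
    toEuclideanCLM (𝕜 := ℂ) (A ⊗ₖ B) (tensorVec x y)
      = tensorVec (toEuclideanCLM (𝕜 := ℂ) A x) (toEuclideanCLM (𝕜 := ℂ) B y) := by
  ext p
  rw [euclid_apply', tensorVec_apply, euclid_apply', euclid_apply']
  rw [Fintype.sum_prod_type, Finset.sum_mul_sum]
  exact Finset.sum_congr rfl fun k _ => Finset.sum_congr rfl fun l _ => by
    rw [tensorVec_apply, kroneckerMap_apply]; ring

lemma opNorm_kron_key (A : Matrix I I ℂ) (B : Matrix J J ℂ)
    (x : EuclideanSpace ℂ I) (y : EuclideanSpace ℂ J) :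
    ‖toEuclideanCLM (𝕜 := ℂ) A x‖ * ‖toEuclideanCLM (𝕜 := ℂ) B y‖
      ≤ opNorm (A ⊗ₖ B) * ‖x‖ * ‖y‖ := by
  have h := (toEuclideanCLM (𝕜 := ℂ) (A ⊗ₖ B)).le_opNorm (tensorVec x y)
  rwa [kron_tensorVec, norm_tensorVec, norm_tensorVec, ← mul_assoc] at h

lemma le_opNorm_kron (A : Matrix I I ℂ) (B : Matrix J J ℂ) :
    opNorm A * opNorm B ≤ opNorm (A ⊗ₖ B) := by
  set c := opNorm (A ⊗ₖ B) with hc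
  have hc0 : 0 ≤ c := norm_nonneg _
  by_cases hB : opNorm B = 0
  · rw [hB, mul_zero]; exact hc0
  have hB0 : 0 < opNorm B := lt_of_le_of_ne (norm_nonneg _) (Ne.symm hB)
  have hA : opNorm A ≤ c / opNorm B := by
    refine ContinuousLinearMap.opNorm_le_bound _ (div_nonneg hc0 hB0.le) fun x => ?_
    by_cases hx : ‖toEuclideanCLM (𝕜 := ℂ) A x‖ = 0
    · rw [hx]
      exact mul_nonneg (div_nonneg hc0 hB0.le) (norm_nonneg _)
    have hx0 : 0 < ‖toEuclideanCLM (𝕜 := ℂ) A x‖ :=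
      lt_of_le_of_ne (norm_nonneg _) (Ne.symm hx)
    have hBle : opNorm B ≤ c * ‖x‖ / ‖toEuclideanCLM (𝕜 := ℂ) A x‖ := by
      refine ContinuousLinearMap.opNorm_le_bound _
        (div_nonneg (mul_nonneg hc0 (norm_nonneg _)) hx0.le) fun y => ?_
      rw [div_mul_eq_mul_div, le_div_iff₀ hx0]
      calc ‖toEuclideanCLM (𝕜 := ℂ) B y‖ * ‖toEuclideanCLM (𝕜 := ℂ) A x‖
          = ‖toEuclideanCLM (𝕜 := ℂ) A x‖ * ‖toEuclideanCLM (𝕜 := ℂ) B y‖ := mul_comm _ _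
        _ ≤ c * ‖x‖ * ‖y‖ := opNorm_kron_key A B x y
    rw [div_mul_eq_mul_div, le_div_iff₀ hB0]
    calc ‖toEuclideanCLM (𝕜 := ℂ) A x‖ * opNorm B
        ≤ ‖toEuclideanCLM (𝕜 := ℂ) A x‖ * (c * ‖x‖ / ‖toEuclideanCLM (𝕜 := ℂ) A x‖) :=
          mul_le_mul_of_nonneg_left hBle (norm_nonneg _)
      _ = c * ‖x‖ := by field_simp
  calc opNorm A * opNorm B ≤ (c / opNorm B) * opNorm B :=
        mul_le_mul_of_nonneg_right hA hB0.le
    _ = c := div_mul_cancel₀ c hB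

lemma opNorm_kron (A : Matrix I I ℂ) (B : Matrix J J ℂ) :
    opNorm (A ⊗ₖ B) = opNorm A * opNorm B :=
  le_antisymm (opNorm_kron_le A B) (le_opNorm_kron A B)

lemma opNorm_of_factor {P : Type*} [Fintype P] [DecidableEq P]
    (e : P ≃ I × J) (M : Matrix P P ℂ) (M₁ : Matrix I I ℂ) (M₂ : Matrix J J ℂ)
    (h : ∀ p q, M p q = M₁ (e p).1 (e q).1 * M₂ (e p).2 (e q).2) :
    opNorm M = opNorm M₁ * opNorm M₂ := by
  have hM : M = reindex e.symm e.symm (M₁ ⊗ₖ M₂) := by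
    ext p q
    rw [h]
    simp [kroneckerMap_apply]
  rw [hM, opNorm_reindex', opNorm_kron]

section Entries
variable {N K D : Type*} [Fintype N] [Fintype K] [DecidableEq K] [Fintype D] [DecidableEq D]

lemma choiMatrix_apply' {A B : Type*} [Fintype A] [DecidableEq A] [Fintype B]
    (L : Matrix A A ℂ →ₗ[ℂ] Matrix B B ℂ) (k l : B) (d e : A) :
    choiMatrix L (k, d) (l, e) = L (Matrix.single d e 1) k l := by
  unfold choiMatrix
  simp [Matrix.sum_apply, Matrix.kroneckerMap_apply, Matrix.single, Matrix.of_apply,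
    ite_mul, mul_ite, Finset.sum_ite_eq, Finset.sum_ite_eq', ite_and]

lemma channel_std_apply (V : Matrix (N × K) D ℂ) (k l : K) (d e : D) :
    channelOfIsometry V (Matrix.single d e 1) k l
      = ∑ a : N, V (a, k) d * star (V (a, l) e) := by
  show ptraceFst (V * Matrix.single d e 1 * Vᴴ) k l = _
  unfold ptraceFst
  simp only [Matrix.of_apply]
  refine Finset.sum_congr rfl fun a _ => ?_
  simp [Matrix.mul_apply, Matrix.conjTranspose_apply, Matrix.single, Matrix.of_apply,
    ite_mul, mul_ite, Finset.sum_ite_eq, Finset.sum_ite_eq', ite_and]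

lemma choi_channel_apply (V : Matrix (N × K) D ℂ) (k l : K) (d e : D) :
    choiMatrix (channelOfIsometry V) (k, d) (l, e)
      = ∑ a : N, V (a, k) d * star (V (a, l) e) := by
  rw [choiMatrix_apply', channel_std_apply]

lemma compChannel_std_apply [DecidableEq N] (V : Matrix (N × K) D ℂ) (k l : N) (d e : D) :
    compChannelOfIsometry V (Matrix.single d e 1) k l
      = ∑ b : K, V (k, b) d * star (V (l, b) e) := by
  show ptraceSnd (V * Matrix.single d e 1 * Vᴴ) k l = _
  unfold ptraceSnd
  simp only [Matrix.of_apply]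
  refine Finset.sum_congr rfl fun b _ => ?_
  simp [Matrix.mul_apply, Matrix.conjTranspose_apply, Matrix.single, Matrix.of_apply,
    ite_mul, mul_ite, Finset.sum_ite_eq, Finset.sum_ite_eq', ite_and]

lemma choi_compChannel_apply [DecidableEq N] (V : Matrix (N × K) D ℂ) (k l : N) (d e : D) :
    choiMatrix (compChannelOfIsometry V) (k, d) (l, e)
      = ∑ b : K, V (k, b) d * star (V (l, b) e) := by
  rw [choiMatrix_apply', compChannel_std_apply]

lemma channel_one_apply (V : Matrix (N × K) D ℂ) (k l : K) :
    channelOfIsometry V 1 k l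
      = ∑ p : N × D, V (p.1, k) p.2 * star (V (p.1, l) p.2) := by
  show ptraceFst (V * 1 * Vᴴ) k l = _
  unfold ptraceFst
  rw [Matrix.mul_one, Fintype.sum_prod_type]
  simp only [Matrix.of_apply]
  refine Finset.sum_congr rfl fun a _ => ?_
  simp [Matrix.mul_apply, Matrix.conjTranspose_apply]

lemma mul_conjTranspose_apply' {P : Type*} (V : Matrix P D ℂ) (p q : P) :
    (V * Vᴴ) p q = ∑ c : D, V p c * star (V q c) := by
  simp [Matrix.mul_apply, Matrix.conjTranspose_apply]

lemma ptranspose_apply {B Q : Type*} (M : Matrix (B × Q) (B × Q) ℂ) (p q : B × Q) :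
    ptranspose M p q = M (p.1, q.2) (q.1, p.2) := rfl

end Entries

end AuxBoundsMult

/-- the five quantities B_C, B_CΓ, B_CcΓ, B_MΓ, B_I are multiplicative
with respect to tensor products of quantum channels given by isometries. -/
theorem bounds_multiplicative {N₁ K₁ D₁ N₂ K₂ D₂ : Type*}
    [Fintype N₁] [DecidableEq N₁] [Fintype K₁] [DecidableEq K₁]
    [Fintype D₁] [DecidableEq D₁]
    [Fintype N₂] [DecidableEq N₂] [Fintype K₂] [DecidableEq K₂]
    [Fintype D₂] [DecidableEq D₂]
    (V₁ : Matrix (N₁ × K₁) D₁ ℂ) (V₂ : Matrix (N₂ × K₂) D₂ ℂ)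
    (hV₁ : V₁ᴴ * V₁ = 1) (hV₂ : V₂ᴴ * V₂ = 1) :
    opNorm (choiMatrix (channelOfIsometry (isometryTensor V₁ V₂))) =
        opNorm (choiMatrix (channelOfIsometry V₁)) *
          opNorm (choiMatrix (channelOfIsometry V₂)) ∧
    opNorm (ptranspose (choiMatrix (channelOfIsometry (isometryTensor V₁ V₂)))) =
        opNorm (ptranspose (choiMatrix (channelOfIsometry V₁))) *
          opNorm (ptranspose (choiMatrix (channelOfIsometry V₂))) ∧
    opNorm (ptranspose (choiMatrix (compChannelOfIsometry (isometryTensor V₁ V₂)))) =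
        opNorm (ptranspose (choiMatrix (compChannelOfIsometry V₁))) *
          opNorm (ptranspose (choiMatrix (compChannelOfIsometry V₂))) ∧
    opNorm (ptranspose (isometryTensor V₁ V₂ * (isometryTensor V₁ V₂)ᴴ)) =
        opNorm (ptranspose (V₁ * V₁ᴴ)) * opNorm (ptranspose (V₂ * V₂ᴴ)) ∧
    opNorm (channelOfIsometry (isometryTensor V₁ V₂) 1) =
        opNorm (channelOfIsometry V₁ 1) * opNorm (channelOfIsometry V₂ 1) := by
  refine ⟨?_, ?_, ?_, ?_, ?_⟩
  · refine opNorm_of_factor (Equiv.prodProdProdComm K₁ K₂ D₁ D₂) _ _ _ fun p q => ?_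
    obtain ⟨⟨k₁, k₂⟩, d₁, d₂⟩ := p
    obtain ⟨⟨l₁, l₂⟩, e₁, e₂⟩ := q
    simp only [Equiv.prodProdProdComm_apply]
    rw [choi_channel_apply, choi_channel_apply, choi_channel_apply, Finset.sum_mul_sum,
      Fintype.sum_prod_type]
    refine Finset.sum_congr rfl fun a₁ _ => Finset.sum_congr rfl fun a₂ _ => ?_
    simp only [isometryTensor, Matrix.of_apply, star_mul']
    ring
  · refine opNorm_of_factor (Equiv.prodProdProdComm K₁ K₂ D₁ D₂) _ _ _ fun p q => ?_
    obtain ⟨⟨k₁, k₂⟩, d₁, d₂⟩ := p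
    obtain ⟨⟨l₁, l₂⟩, e₁, e₂⟩ := q
    simp only [Equiv.prodProdProdComm_apply, ptranspose_apply]
    rw [choi_channel_apply, choi_channel_apply, choi_channel_apply, Finset.sum_mul_sum,
      Fintype.sum_prod_type]
    refine Finset.sum_congr rfl fun a₁ _ => Finset.sum_congr rfl fun a₂ _ => ?_
    simp only [isometryTensor, Matrix.of_apply, star_mul']
    ring
  · refine opNorm_of_factor (Equiv.prodProdProdComm N₁ N₂ D₁ D₂) _ _ _ fun p q => ?_
    obtain ⟨⟨k₁, k₂⟩, d₁, d₂⟩ := p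
    obtain ⟨⟨l₁, l₂⟩, e₁, e₂⟩ := q
    simp only [Equiv.prodProdProdComm_apply, ptranspose_apply]
    rw [choi_compChannel_apply, choi_compChannel_apply, choi_compChannel_apply,
      Finset.sum_mul_sum, Fintype.sum_prod_type]
    refine Finset.sum_congr rfl fun b₁ _ => Finset.sum_congr rfl fun b₂ _ => ?_
    simp only [isometryTensor, Matrix.of_apply, star_mul']
    ring
  · refine opNorm_of_factor (Equiv.prodProdProdComm N₁ N₂ K₁ K₂) _ _ _ fun p q => ?_
    obtain ⟨⟨n₁, n₂⟩, k₁, k₂⟩ := p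
    obtain ⟨⟨m₁, m₂⟩, l₁, l₂⟩ := q
    simp only [Equiv.prodProdProdComm_apply, ptranspose_apply]
    rw [mul_conjTranspose_apply', mul_conjTranspose_apply', mul_conjTranspose_apply',
      Finset.sum_mul_sum, Fintype.sum_prod_type]
    refine Finset.sum_congr rfl fun c₁ _ => Finset.sum_congr rfl fun c₂ _ => ?_
    simp only [isometryTensor, Matrix.of_apply, star_mul']
    ring
  · refine opNorm_of_factor (Equiv.refl (K₁ × K₂)) _ _ _ fun p q => ?_
    obtain ⟨k₁, k₂⟩ := p
    obtain ⟨l₁, l₂⟩ := q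
    simp only [Equiv.refl_apply]
    rw [channel_one_apply, channel_one_apply, channel_one_apply, Finset.sum_mul_sum]
    rw [← Equiv.sum_comp (Equiv.prodProdProdComm N₁ D₁ N₂ D₂)
      (fun p : (N₁ × N₂) × (D₁ × D₂) =>
        isometryTensor V₁ V₂ (p.1, (k₁, k₂)) p.2
          * star (isometryTensor V₁ V₂ (p.1, (l₁, l₂)) p.2))]
    rw [Fintype.sum_prod_type]
    refine Finset.sum_congr rfl fun p₁ _ => Finset.sum_congr rfl fun p₂ _ => ?_
    simp only [isometryTensor, Matrix.of_apply, star_mul', Equiv.prodProdProdComm_symm,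
      Equiv.prodProdProdComm_apply]
    ring
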